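/- Let b₁, …, b_m be vectors in ℝⁿ that span ℝⁿ. Then the function y ↦ log det(Σⱼ e^{yⱼ} · bⱼbⱼᵀ) is convex on ℝᵐ. (Consequently, in the rank-one case nⱼ = 1 for all j, the Lieb formulation of the Brascamp–Lieb constant becomes a concave maximization problem after the change of variables Xⱼ = e^{yⱼ}/pⱼ.) -/

import Mathlib

open Matrix

namespace LogDetAux

variable {n m : ℕ}

/-- The determinant of a rank-one sum with coefficients, through the "row" alternating map. -/
noncomputable def D (b : Fin m → Fin n → ℝ) (r : Fin n → Fin m) : ℝ :=
  (Matrix.of fun i k => b (r i) k).det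

/-- Cauchy–Binet coefficients. -/
noncomputable def w (n m : ℕ) (b : Fin m → Fin n → ℝ) (S : Finset (Fin m)) : ℝ :=
  if h : S.card = n then ((Matrix.of fun i k => b (S.orderEmbOfFin h i) k).det) ^ 2 else 0

lemma w_nonneg (b : Fin m → Fin n → ℝ) (S : Finset (Fin m)) : 0 ≤ w n m b S := by
  unfold w
  split
  · positivity
  · exact le_rfl

lemma det_expand (b : Fin m → Fin n → ℝ) (c : Fin m → ℝ) :
    (∑ j, c j • vecMulVec (b j) (b j)).det
      = ∑ S : Finset (Fin m), w n m b S * ∏ j ∈ S, c j := by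
  classical
  -- Step A: rewrite as alternating map of sum of rows
  have hM : (∑ j, c j • vecMulVec (b j) (b j))
      = Matrix.of (fun i => ∑ j : Fin m, (c j * b j i) • b j) := by
    ext i k
    simp [Matrix.sum_apply, Matrix.smul_apply, vecMulVec_apply, smul_eq_mul,
      Matrix.of_apply, Finset.sum_apply, Pi.smul_apply, mul_assoc]
  have h0 : (∑ j, c j • vecMulVec (b j) (b j)).det
      = Matrix.detRowAlternating.toMultilinearMap
          (fun i => ∑ j : Fin m, (c j * b j i) • b j) := by
    rw [hM]; rfl
  rw [h0, MultilinearMap.map_sum]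
  -- Step B: pull out scalars
  have h1 : ∀ r : Fin n → Fin m,
      Matrix.detRowAlternating.toMultilinearMap (fun i => (c (r i) * b (r i) i) • b (r i))
        = (∏ i, (c (r i) * b (r i) i)) * D b r := by
    intro r
    rw [MultilinearMap.map_smul_univ]
    rfl
  simp only [h1]
  -- Step C: group by image
  rw [← Finset.sum_fiberwise Finset.univ
      (fun r : Fin n → Fin m => Finset.image r Finset.univ)
      (fun r => (∏ i, (c (r i) * b (r i) i)) * D b r)]
  refine Finset.sum_congr rfl fun S _ => ?_
  by_cases h : S.card = n
  · -- bijection with permutations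
    set e := S.orderEmbOfFin h with he
    have hSimage : Finset.image (⇑e) Finset.univ = S := by
      apply Finset.coe_injective
      rw [Finset.coe_image, Finset.coe_univ, Set.image_univ, Finset.range_orderEmbOfFin]
    have hbij : ∑ r ∈ Finset.univ.filter
          (fun r : Fin n → Fin m => Finset.image r Finset.univ = S),
          (∏ i, (c (r i) * b (r i) i)) * D b r
        = ∑ π : Equiv.Perm (Fin n),
          (∏ i, (c (e (π i)) * b (e (π i)) i)) * D b (⇑e ∘ ⇑π) := by
      refine (Finset.sum_bij (fun (π : Equiv.Perm (Fin n)) _ => ⇑e ∘ ⇑π) ?_ ?_ ?_ ?_).symm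
      · intro π _
        simp only [Finset.mem_filter, Finset.mem_univ, true_and]
        rw [← hSimage]
        ext t
        simp only [Finset.mem_image, Finset.mem_univ, true_and, Function.comp_apply]
        constructor
        · rintro ⟨i, rfl⟩
          exact ⟨π i, rfl⟩
        · rintro ⟨i, rfl⟩
          exact ⟨π.symm i, by rw [Equiv.apply_symm_apply]⟩
      · intro π _ π' _ hpp
        exact Equiv.ext fun i => e.injective (congrFun hpp i)
      · intro r hr
        simp only [Finset.mem_filter, Finset.mem_univ, true_and] at hr
        have hinj : Function.Injective r := by
          have hcard : (Finset.image r Finset.univ).card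
              = (Finset.univ : Finset (Fin n)).card := by
            rw [hr, h, Finset.card_univ, Fintype.card_fin]
          have := Finset.injOn_of_card_image_eq hcard
          intro a a' haa
          exact this (Finset.mem_coe.mpr (Finset.mem_univ a))
            (Finset.mem_coe.mpr (Finset.mem_univ a')) haa
        have hmem : ∀ i, r i ∈ S := by
          intro i
          rw [← hr]
          exact Finset.mem_image_of_mem r (Finset.mem_univ i)
        set E := S.orderIsoOfFin h with hE
        let g : Fin n → Fin n := fun i => E.symm ⟨r i, hmem i⟩
        have hg : ∀ i, e (g i) = r i := by
          intro i
          have : (E (E.symm ⟨r i, hmem i⟩) : Fin m) = r i := by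
            rw [OrderIso.apply_symm_apply]
          rw [← this]
          exact (S.coe_orderIsoOfFin_apply h _)
        have hginj : Function.Injective g := by
          intro i i' hii
          apply hinj
          rw [← hg i, ← hg i', hii]
        refine ⟨Equiv.ofBijective g (Finite.injective_iff_bijective.mp hginj),
          Finset.mem_univ _, ?_⟩
        funext i
        exact hg i
      · intro π _
        rfl
    rw [hbij]
    -- evaluate the permutation sum
    set N : Matrix (Fin n) (Fin n) ℝ := Matrix.of fun i k => b (e i) k with hN
    have hc : ∀ π : Equiv.Perm (Fin n), ∏ i, c (e (π i)) = ∏ j ∈ S, c j := by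
      intro π
      rw [Equiv.prod_comp π (fun i => c (e i)), ← hSimage,
        Finset.prod_image (fun x _ y _ hxy => e.injective hxy)]
    have hD : ∀ π : Equiv.Perm (Fin n),
        D b (⇑e ∘ ⇑π) = (Equiv.Perm.sign π : ℤ) * N.det := by
      intro π
      have h2 : (Matrix.of fun i k => b ((⇑e ∘ ⇑π) i) k) = N.submatrix (⇑π) id := rfl
      unfold D
      rw [h2, Matrix.det_permute]
    have hterm : ∀ π : Equiv.Perm (Fin n),
        (∏ i, (c (e (π i)) * b (e (π i)) i)) * D b (⇑e ∘ ⇑π)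
          = ((∏ j ∈ S, c j) * N.det) *
              ((Equiv.Perm.sign π : ℤ) * ∏ i, b (e (π i)) i) := by
      intro π
      rw [Finset.prod_mul_distrib, hc, hD]
      ring
    simp only [hterm]
    rw [← Finset.mul_sum]
    have hdetN : ∑ π : Equiv.Perm (Fin n),
        ((Equiv.Perm.sign π : ℤ) : ℝ) * ∏ i, b (e (π i)) i = N.det := by
      rw [Matrix.det_apply]
      refine Finset.sum_congr rfl fun π _ => ?_
      simp [Units.smul_def, zsmul_eq_mul, hN]
    rw [hdetN, w, dif_pos h]
    ring
  · -- degenerate fibers vanish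
    rw [w, dif_neg h]
    rw [zero_mul]
    refine Finset.sum_eq_zero fun r hr => ?_
    simp only [Finset.mem_filter, Finset.mem_univ, true_and] at hr
    have hninj : ¬ Function.Injective r := by
      intro hinj
      apply h
      rw [← hr, Finset.card_image_of_injective _ hinj, Finset.card_univ, Fintype.card_fin]
    have : D b r = 0 := by
      apply AlternatingMap.map_eq_zero_of_not_injective Matrix.detRowAlternating
      intro hinj
      apply hninj
      intro i i' hii
      exact hinj (show b (r i) = b (r i') by rw [hii])
    rw [this, mul_zero]

end LogDetAux

open LogDetAux

/-- if the vectors `b₁, …, b_m` span `ℝⁿ`, then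
`y ↦ log det(Σⱼ e^{yⱼ}·bⱼbⱼᵀ)` is convex on `ℝᵐ`.  (This is the rank-one case of
the Lieb formulation of the Brascamp–Lieb constant after the substitution
`Xⱼ = e^{yⱼ}/pⱼ`.) -/
theorem logDet_sum_exp_rank_one_convex (n m : ℕ) (b : Fin m → (Fin n → ℝ))
    (hspan : Submodule.span ℝ (Set.range b) = ⊤) :
    ConvexOn ℝ Set.univ
      (fun y : Fin m → ℝ =>
        Real.log (∑ j, Real.exp (y j) • Matrix.vecMulVec (b j) (b j)).det) := by
  classical
  set F : (Fin m → ℝ) → ℝ :=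
    fun y => ∑ S : Finset (Fin m), w n m b S * Real.exp (∑ j ∈ S, y j) with hF
  -- representation
  have hrepr : ∀ y : Fin m → ℝ,
      (∑ j, Real.exp (y j) • Matrix.vecMulVec (b j) (b j)).det = F y := by
    intro y
    rw [det_expand b (fun j => Real.exp (y j)), hF]
    exact Finset.sum_congr rfl fun S _ => by rw [Real.exp_sum]
  -- positive definiteness
  have hpd : ∀ y : Fin m → ℝ,
      (∑ j, Real.exp (y j) • Matrix.vecMulVec (b j) (b j)).PosDef := by
    intro y
    rw [Matrix.posDef_iff_dotProduct_mulVec]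
    constructor
    · unfold Matrix.IsHermitian
      ext i k
      simp [Matrix.conjTranspose_apply, Matrix.sum_apply, vecMulVec_apply, mul_comm]
    · intro x hx
      have hquad : dotProduct (star x)
          ((∑ j, Real.exp (y j) • Matrix.vecMulVec (b j) (b j)) *ᵥ x)
            = ∑ j, Real.exp (y j) * (b j ⬝ᵥ x) ^ 2 := by
        simp only [star_trivial, dotProduct, Matrix.mulVec, Matrix.sum_apply,
          Matrix.smul_apply, vecMulVec_apply, smul_eq_mul, dotProduct,
          Finset.sum_mul, Finset.mul_sum, pow_two]
        calc ∑ i : Fin n, ∑ k : Fin n, ∑ j : Fin m,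
                x i * (Real.exp (y j) * (b j i * b j k) * x k)
            = ∑ i : Fin n, ∑ j : Fin m, ∑ k : Fin n,
                x i * (Real.exp (y j) * (b j i * b j k) * x k) :=
              Finset.sum_congr rfl fun i _ => Finset.sum_comm
          _ = ∑ j : Fin m, ∑ i : Fin n, ∑ k : Fin n,
                x i * (Real.exp (y j) * (b j i * b j k) * x k) :=
              Finset.sum_comm
          _ = ∑ j : Fin m, ∑ k : Fin n, ∑ i : Fin n,
                x i * (Real.exp (y j) * (b j i * b j k) * x k) :=
              Finset.sum_congr rfl fun j _ => Finset.sum_comm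
          _ = ∑ j : Fin m, ∑ k : Fin n, ∑ i : Fin n,
                Real.exp (y j) * (b j i * x i * (b j k * x k)) :=
              Finset.sum_congr rfl fun j _ => Finset.sum_congr rfl fun k _ =>
                Finset.sum_congr rfl fun i _ => by ring
      rw [hquad]
      have hexists : ∃ j, b j ⬝ᵥ x ≠ 0 := by
        by_contra hcon
        push_neg at hcon
        apply hx
        have hW : ∀ v ∈ Submodule.span ℝ (Set.range b), v ⬝ᵥ x = 0 := by
          let W : Submodule ℝ (Fin n → ℝ) :=
            { carrier := {v | v ⬝ᵥ x = 0}
              add_mem' := fun hv hw => by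
                simp only [Set.mem_setOf_eq] at *
                rw [add_dotProduct, hv, hw, add_zero]
              zero_mem' := by simp [zero_dotProduct]
              smul_mem' := fun a v hv => by
                simp only [Set.mem_setOf_eq] at *
                rw [smul_dotProduct, hv, smul_zero] }
          intro v hv
          have : Submodule.span ℝ (Set.range b) ≤ W := by
            rw [Submodule.span_le]
            rintro _ ⟨j, rfl⟩
            exact hcon j
          exact this hv
        have hxx : x ⬝ᵥ x = 0 := hW x (by rw [hspan]; trivial)
        exact dotProduct_self_eq_zero.mp hxx
      obtain ⟨j0, hj0⟩ := hexists
      refine Finset.sum_pos' (fun j _ => by positivity) ⟨j0, Finset.mem_univ _, ?_⟩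
      exact mul_pos (Real.exp_pos _) (pow_two_pos_of_ne_zero hj0)
  have hFpos : ∀ y, 0 < F y := fun y => by rw [← hrepr]; exact (hpd y).det_pos
  -- rewrite the goal via the representation
  have hfun : (fun y : Fin m → ℝ =>
      Real.log (∑ j, Real.exp (y j) • Matrix.vecMulVec (b j) (b j)).det)
        = fun y => Real.log (F y) := funext fun y => by rw [hrepr]
  rw [hfun]
  -- convexity of log-sum-exp
  refine ⟨convex_univ, ?_⟩
  intro x _ z _ a a' ha ha' hab
  have hlin : ∀ S : Finset (Fin m),
      (∑ j ∈ S, (a • x + a' • z) j) = a * (∑ j ∈ S, x j) + a' * (∑ j ∈ S, z j) := by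
    intro S
    rw [Finset.mul_sum, Finset.mul_sum, ← Finset.sum_add_distrib]
    exact Finset.sum_congr rfl fun j _ => by simp [mul_comm]
  rcases ha.eq_or_lt with rfl | hapos
  · have ha1 : a' = 1 := by linarith
    subst ha1
    simp
  rcases ha'.eq_or_lt with rfl | hapos'
  · have ha1 : a = 1 := by linarith
    subst ha1
    simp
  -- main case : 0 < a, 0 < a'
  have halt : a < 1 := by linarith
  have key : F (a • x + a' • z) ≤ F x ^ a * F z ^ a' := by
    have h1 : ∀ S : Finset (Fin m),
        w n m b S * Real.exp (∑ j ∈ S, (a • x + a' • z) j)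
          = (w n m b S * Real.exp (∑ j ∈ S, x j)) ^ a *
            (w n m b S * Real.exp (∑ j ∈ S, z j)) ^ a' := by
      intro S
      rw [hlin S,
        Real.mul_rpow (w_nonneg b S) (Real.exp_nonneg _),
        Real.mul_rpow (w_nonneg b S) (Real.exp_nonneg _)]
      have hw : w n m b S ^ a * w n m b S ^ a' = w n m b S := by
        rw [← Real.rpow_add' (w_nonneg b S) (by rw [hab]; norm_num), hab, Real.rpow_one]
      rw [show a * (∑ j ∈ S, x j) + a' * (∑ j ∈ S, z j)
          = (∑ j ∈ S, x j) * a + (∑ j ∈ S, z j) * a' by ring,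
        Real.exp_add, Real.exp_mul, Real.exp_mul]
      conv_lhs => rw [← hw]
      ring
    have hpq : Real.HolderConjugate (1 / a) (1 / a') := by
      rw [Real.holderConjugate_iff]
      constructor
      · rw [one_div]
        exact (one_lt_inv₀ hapos).2 halt
      · rw [one_div, one_div, inv_inv, inv_inv, hab]
    calc F (a • x + a' • z)
        = ∑ S : Finset (Fin m),
            (w n m b S * Real.exp (∑ j ∈ S, x j)) ^ a *
            (w n m b S * Real.exp (∑ j ∈ S, z j)) ^ a' :=
          Finset.sum_congr rfl fun S _ => h1 S
      _ ≤ (∑ S : Finset (Fin m),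
              ((w n m b S * Real.exp (∑ j ∈ S, x j)) ^ a) ^ (1 / a)) ^ (1 / (1 / a)) *
          (∑ S : Finset (Fin m),
              ((w n m b S * Real.exp (∑ j ∈ S, z j)) ^ a') ^ (1 / a')) ^ (1 / (1 / a')) :=
          Real.inner_le_Lp_mul_Lq_of_nonneg _ hpq
            (fun S _ => Real.rpow_nonneg
              (mul_nonneg (w_nonneg b S) (Real.exp_nonneg _)) _)
            (fun S _ => Real.rpow_nonneg
              (mul_nonneg (w_nonneg b S) (Real.exp_nonneg _)) _)
      _ = F x ^ a * F z ^ a' := by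
          rw [one_div_one_div, one_div_one_div]
          have hx' : ∀ S ∈ (Finset.univ : Finset (Finset (Fin m))),
              ((w n m b S * Real.exp (∑ j ∈ S, x j)) ^ a) ^ (1 / a)
                = w n m b S * Real.exp (∑ j ∈ S, x j) := by
            intro S _
            rw [← Real.rpow_mul (mul_nonneg (w_nonneg b S) (Real.exp_nonneg _)),
              mul_one_div_cancel hapos.ne', Real.rpow_one]
          have hz' : ∀ S ∈ (Finset.univ : Finset (Finset (Fin m))),
              ((w n m b S * Real.exp (∑ j ∈ S, z j)) ^ a') ^ (1 / a')
                = w n m b S * Real.exp (∑ j ∈ S, z j) := by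
            intro S _
            rw [← Real.rpow_mul (mul_nonneg (w_nonneg b S) (Real.exp_nonneg _)),
              mul_one_div_cancel hapos'.ne', Real.rpow_one]
          rw [Finset.sum_congr rfl hx', Finset.sum_congr rfl hz']
  have hfinal : Real.log (F (a • x + a' • z))
      ≤ a * Real.log (F x) + a' * Real.log (F z) := by
    calc Real.log (F (a • x + a' • z))
        ≤ Real.log (F x ^ a * F z ^ a') := Real.log_le_log (hFpos _) key
      _ = a * Real.log (F x) + a' * Real.log (F z) := by
          rw [Real.log_mul (ne_of_gt (Real.rpow_pos_of_pos (hFpos x) a))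
            (ne_of_gt (Real.rpow_pos_of_pos (hFpos z) a')),
            Real.log_rpow (hFpos x), Real.log_rpow (hFpos z)]
  simpa [smul_eq_mul] using hfinal
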